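/- Let (W,W') be an exchangeable pair of ℤ^d-valued random vectors, ξ := W'-W, and J ∈ ℤ^d with q^J := P[ξ=J] > 0. Define Q^J(W) := P[ξ = J | W] and u^J := (q^J)⁻¹ E|Q^J(W) - q^J|. Then the total variation distance between the law of W+J and the law of W satisfies d_TV(L(W+J), L(W)) ≤ u^J + u^{-J}. -/

import Mathlib

open MeasureTheory

/-- Total variation distance between two measures. -/
noncomputable def tvDist {α : Type*} [MeasurableSpace α] (μ ν : Measure α) : ℝ :=
  ⨆ s : Set α, |(μ s).toReal - (ν s).toReal|

theorem stmt5 {Ω : Type*} [MeasurableSpace Ω] (ℙ : Measure Ω) [IsProbabilityMeasure ℙ]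
    {d : ℕ} (W W' : Ω → Fin d → ℤ) (hW : Measurable W) (hW' : Measurable W')
    (hex : Measure.map (fun ω => (W ω, W' ω)) ℙ = Measure.map (fun ω => (W' ω, W ω)) ℙ)
    (J : Fin d → ℤ)
    (q : (Fin d → ℤ) → ℝ) (hq : ∀ K, q K = (ℙ {ω | W' ω - W ω = K}).toReal)
    (hqJ : 0 < q J)
    (Q : (Fin d → ℤ) → Ω → ℝ)
    (hQ : ∀ K, Q K = ℙ[Set.indicator {ω | W' ω - W ω = K} (fun _ => (1 : ℝ)) |
      MeasurableSpace.comap W inferInstance])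
    (u : (Fin d → ℤ) → ℝ) (hu : ∀ K, u K = (q K)⁻¹ * ∫ ω, |Q K ω - q K| ∂ℙ) :
    tvDist (Measure.map (fun ω => W ω + J) ℙ) (Measure.map W ℙ) ≤ u J + u (-J) := by
  have hm : MeasurableSpace.comap W inferInstance ≤ ‹MeasurableSpace Ω› := hW.comap_le
  -- exchangeability for arbitrary sets of pairs
  have key : ∀ C : Set ((Fin d → ℤ) × (Fin d → ℤ)),
      ℙ {ω | (W ω, W' ω) ∈ C} = ℙ {ω | (W' ω, W ω) ∈ C} := by
    intro C
    have hC : MeasurableSet C := C.to_countable.measurableSet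
    have h1 := Measure.map_apply (μ := ℙ) (hW.prodMk hW') hC
    have h2 := Measure.map_apply (μ := ℙ) (hW'.prodMk hW) hC
    have := congrArg (fun μ : Measure _ => μ C) hex
    rw [h1, h2] at this
    exact this
  -- measurability of ξ-level sets
  have hmeasXi : ∀ K : Fin d → ℤ, MeasurableSet {ω | W' ω - W ω = K} := by
    intro K
    have : Measurable (fun ω => W' ω - W ω) := hW'.sub hW
    exact this (Set.Countable.measurableSet (Set.to_countable {K}))
  -- set-integral identity for Q
  have hsetint : ∀ (K : Fin d → ℤ) (s' : Set (Fin d → ℤ)),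
      ∫ ω in W ⁻¹' s', Q K ω ∂ℙ
        = (ℙ (W ⁻¹' s' ∩ {ω | W' ω - W ω = K})).toReal := by
    intro K s'
    have hA : MeasurableSet[MeasurableSpace.comap W inferInstance] (W ⁻¹' s') :=
      ⟨s', s'.to_countable.measurableSet, rfl⟩
    have hint : Integrable ({ω | W' ω - W ω = K}.indicator (fun _ => (1 : ℝ))) ℙ :=
      (integrable_const (1 : ℝ)).indicator (hmeasXi K)
    rw [hQ K, setIntegral_condExp hm hint hA, setIntegral_indicator (hmeasXi K),
      setIntegral_const]
    simp
    rfl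
  -- q(-J) = q(J)
  have hqsym : q (-J) = q J := by
    have h := key {p | p.2 - p.1 = J}
    rw [hq, hq]
    congr 1
    have h1 : {ω | (W ω, W' ω) ∈ {p : (Fin d → ℤ) × (Fin d → ℤ) | p.2 - p.1 = J}}
        = {ω | W' ω - W ω = J} := rfl
    have h2 : {ω | (W' ω, W ω) ∈ {p : (Fin d → ℤ) × (Fin d → ℤ) | p.2 - p.1 = J}}
        = {ω | W' ω - W ω = -J} := by
      ext ω
      simp only [Set.mem_setOf_eq]
      constructor
      · intro hh; linear_combination -hh
      · intro hh; linear_combination -hh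
    rw [h1, h2] at h
    exact h.symm
  -- integrability facts
  have hintQ : ∀ K, Integrable (Q K) ℙ := by
    intro K; rw [hQ K]; exact integrable_condExp
  have hintQq : ∀ K, Integrable (fun ω => Q K ω - q K) ℙ :=
    fun K => (hintQ K).sub (integrable_const _)
  -- bound for set integrals of Q K - q K
  have hbound : ∀ (K : Fin d → ℤ) (A : Set Ω),
      |∫ ω in A, (Q K ω - q K) ∂ℙ| ≤ ∫ ω, |Q K ω - q K| ∂ℙ := by
    intro K A
    calc |∫ ω in A, (Q K ω - q K) ∂ℙ| ≤ ∫ ω in A, |Q K ω - q K| ∂ℙ := by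
          have := norm_integral_le_integral_norm (μ := ℙ.restrict A)
            (f := fun ω => Q K ω - q K)
          simpa [Real.norm_eq_abs] using this
      _ ≤ ∫ ω, |Q K ω - q K| ∂ℙ := by
          refine setIntegral_le_integral ((hintQq K).abs) ?_
          exact Filter.Eventually.of_forall fun ω => abs_nonneg _
  -- main bound per set
  refine ciSup_le fun s => ?_
  set A : Set Ω := W ⁻¹' {x | x + J ∈ s} with hAdef
  set B : Set Ω := W ⁻¹' s with hBdef
  have hmapJ : (Measure.map (fun ω => W ω + J) ℙ) s = ℙ A := by
    have hmeasWJ : Measurable (fun ω => W ω + J) :=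
      (measurable_of_countable (fun x : Fin d → ℤ => x + J)).comp hW
    rw [Measure.map_apply hmeasWJ (s.to_countable.measurableSet)]
    rfl
  have hmapW : (Measure.map W ℙ) s = ℙ B := by
    rw [Measure.map_apply hW (s.to_countable.measurableSet)]
  rw [hmapJ, hmapW]
  set pA : ℝ := (ℙ A).toReal
  set pB : ℝ := (ℙ B).toReal
  -- step 3: P(A ∩ {ξ=J}) = P(B ∩ {ξ=-J})
  have hswap : ℙ (A ∩ {ω | W' ω - W ω = J}) = ℙ (B ∩ {ω | W' ω - W ω = -J}) := by
    have h := key {p | p.2 ∈ s ∧ p.2 - p.1 = J}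
    have h1 : {ω | (W ω, W' ω) ∈ {p : (Fin d → ℤ) × (Fin d → ℤ) | p.2 ∈ s ∧ p.2 - p.1 = J}}
        = A ∩ {ω | W' ω - W ω = J} := by
      ext ω
      simp only [Set.mem_setOf_eq, hAdef, Set.mem_inter_iff, Set.mem_preimage]
      constructor
      · rintro ⟨h1, h2⟩
        refine ⟨?_, h2⟩
        have : W' ω = W ω + J := by rw [← h2]; abel
        rwa [← this]
      · rintro ⟨h1, h2⟩
        refine ⟨?_, h2⟩
        have : W' ω = W ω + J := by rw [← h2]; abel
        rwa [this]
    have h2 : {ω | (W' ω, W ω) ∈ {p : (Fin d → ℤ) × (Fin d → ℤ) | p.2 ∈ s ∧ p.2 - p.1 = J}}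
        = B ∩ {ω | W' ω - W ω = -J} := by
      ext ω
      simp only [Set.mem_setOf_eq, hBdef, Set.mem_inter_iff, Set.mem_preimage]
      constructor
      · rintro ⟨h1, h2⟩
        exact ⟨h1, by linear_combination -h2⟩
      · rintro ⟨h1, h2⟩
        exact ⟨h1, by linear_combination -h2⟩
    rw [h1, h2] at h
    exact h
  -- set integrals identities
  have hIA : ∫ ω in A, (Q J ω - q J) ∂ℙ
      = (ℙ (A ∩ {ω | W' ω - W ω = J})).toReal - q J * pA := by
    rw [integral_sub (Integrable.restrict (hintQ J)) (integrable_const _),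
      hsetint J _, setIntegral_const]
    simp only [smul_eq_mul, mul_one]
    rw [mul_comm]
    rfl
  have hIB : ∫ ω in B, (Q (-J) ω - q (-J)) ∂ℙ
      = (ℙ (B ∩ {ω | W' ω - W ω = -J})).toReal - q (-J) * pB := by
    rw [integral_sub (Integrable.restrict (hintQ (-J))) (integrable_const _),
      hsetint (-J) _, setIntegral_const]
    simp only [smul_eq_mul, mul_one]
    rw [mul_comm]
    rfl
  -- combine
  have hcombine : q J * (pA - pB)
      = (∫ ω in B, (Q (-J) ω - q (-J)) ∂ℙ) - ∫ ω in A, (Q J ω - q J) ∂ℙ := by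
    rw [hIA, hIB, hswap, hqsym]
    ring
  have habs : |pA - pB| ≤ (q J)⁻¹ * ((∫ ω, |Q (-J) ω - q (-J)| ∂ℙ) + ∫ ω, |Q J ω - q J| ∂ℙ) := by
    have h1 : |q J * (pA - pB)|
        ≤ (∫ ω, |Q (-J) ω - q (-J)| ∂ℙ) + ∫ ω, |Q J ω - q J| ∂ℙ := by
      rw [hcombine]
      calc |(∫ ω in B, (Q (-J) ω - q (-J)) ∂ℙ) - ∫ ω in A, (Q J ω - q J) ∂ℙ|
          ≤ |∫ ω in B, (Q (-J) ω - q (-J)) ∂ℙ| + |∫ ω in A, (Q J ω - q J) ∂ℙ| :=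
            abs_sub _ _
        _ ≤ _ := add_le_add (hbound (-J) B) (hbound J A)
    have h2 : |q J * (pA - pB)| = q J * |pA - pB| := by
      rw [abs_mul, abs_of_pos hqJ]
    rw [h2] at h1
    rw [inv_mul_eq_div, le_div_iff₀ hqJ, mul_comm]
    exact h1
  calc |pA - pB| ≤ (q J)⁻¹ * ((∫ ω, |Q (-J) ω - q (-J)| ∂ℙ) + ∫ ω, |Q J ω - q J| ∂ℙ) := habs
    _ = u J + u (-J) := by
        rw [hu J, hu (-J), hqsym]
        ring
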